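/- For every finite simple graph G, there exists a proper coloring of G achieving the chromatic sum Σ(G) and using at most Δ(G)+1 colors; equivalently, the chromatic strength satisfies s(G) ≤ Δ(G)+1. -/
import Mathlib


/-- A proper coloring of `G` with positive natural-number colors. -/
def IsProperColoring {V : Type*} (G : SimpleGraph V) (c : V → ℕ) : Prop :=
  (∀ u v, G.Adj u v → c u ≠ c v) ∧ ∀ v, 1 ≤ c v

/-- The chromatic sum `Σ(G)`: the minimum over proper colorings of
`∑_v c v = ∑_i i · |X_i|`. -/
noncomputable def chromaticSum {V : Type*} [Fintype V] (G : SimpleGraph V) : ℕ :=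
  sInf { s | ∃ c : V → ℕ, IsProperColoring G c ∧ s = ∑ v, c v }

/-- The chromatic strength `s(G)`: the minimum `k` such that some proper
coloring with colors in `{1,…,k}` achieves the chromatic sum. -/
noncomputable def strength {V : Type*} [Fintype V] (G : SimpleGraph V) : ℕ :=
  sInf { k | ∃ c : V → ℕ, IsProperColoring G c ∧ (∀ v, c v ≤ k) ∧
    ∑ v, c v = chromaticSum G }

/-- there is a proper coloring achieving the chromatic sum that
uses at most `Δ(G) + 1` colors; equivalently, `s(G) ≤ Δ(G) + 1`. -/
theorem strength_stmt_2 {V : Type*} [Fintype V] (G : SimpleGraph V)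
    [DecidableRel G.Adj] :
    (∃ c : V → ℕ, IsProperColoring G c ∧ (∀ v, c v ≤ G.maxDegree + 1) ∧
      ∑ v, c v = chromaticSum G) ∧
    strength G ≤ G.maxDegree + 1 := by
  classical
  set S := { s | ∃ c : V → ℕ, IsProperColoring G c ∧ s = ∑ v, c v } with hS
  -- the set is nonempty: use an injective coloring
  have hne : S.Nonempty := by
    obtain ⟨e⟩ := Fintype.truncEquivFin V
    refine ⟨∑ v, ((e v : ℕ) + 1), fun v => (e v : ℕ) + 1, ⟨?_, fun v => le_add_self⟩, rfl⟩
    intro u v huv h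
    simp only [Nat.add_right_cancel_iff] at h
    exact G.ne_of_adj huv (e.injective (Fin.ext h))
  have hmem : chromaticSum G ∈ S := Nat.sInf_mem hne
  obtain ⟨c, hc, hsum⟩ := hmem
  -- every vertex in a minimum coloring has color ≤ Δ + 1
  have hbd : ∀ v, c v ≤ G.maxDegree + 1 := by
    intro v
    by_contra hv
    push_neg at hv
    -- find a free color in {1, …, Δ+1} for v
    have hcard : ((G.neighborFinset v).image c).card < (Finset.Icc 1 (G.maxDegree + 1)).card := by
      calc ((G.neighborFinset v).image c).card ≤ (G.neighborFinset v).card :=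
            Finset.card_image_le
        _ = G.degree v := G.card_neighborFinset_eq_degree v
        _ ≤ G.maxDegree := G.degree_le_maxDegree v
        _ < (Finset.Icc 1 (G.maxDegree + 1)).card := by
            rw [Nat.card_Icc]; omega
    have hnsub : ¬ Finset.Icc 1 (G.maxDegree + 1) ⊆ (G.neighborFinset v).image c :=
      fun h => absurd (Finset.card_le_card h) (by omega)
    obtain ⟨k, hkIcc, hkfree⟩ := Finset.not_subset.1 hnsub
    rw [Finset.mem_Icc] at hkIcc
    set c' := Function.update c v k with hc'
    have hc'v : c' v = k := Function.update_self v k c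
    have hc'ne : ∀ u, u ≠ v → c' u = c u := fun u hu => Function.update_of_ne hu k c
    have hproper : IsProperColoring G c' := by
      constructor
      · intro u w huw
        have huw' : u ≠ w := G.ne_of_adj huw
        by_cases hu : u = v
        · have hwv : w ≠ v := fun h => huw' (hu.trans h.symm)
          rw [hc'ne w hwv, hu, hc'v]
          intro h
          exact hkfree (h ▸ Finset.mem_image_of_mem c
            ((G.mem_neighborFinset v w).2 (hu ▸ huw)))
        · by_cases hw : w = v
          · rw [hc'ne u hu, hw, hc'v]
            intro h
            exact hkfree (h.symm ▸ Finset.mem_image_of_mem c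
              ((G.mem_neighborFinset v u).2 (hw ▸ huw.symm)))
          · rw [hc'ne u hu, hc'ne w hw]; exact hc.1 u w huw
      · intro u
        by_cases hu : u = v
        · subst hu; rw [hc'v]; exact hkIcc.1
        · rw [hc'ne u hu]; exact hc.2 u
    -- the new sum is smaller
    have hlt : ∑ u, c' u < ∑ u, c u := by
      have h1 : ∑ u, c' u = k + ∑ u ∈ Finset.univ.erase v, c u := by
        rw [hc', Finset.sum_update_of_mem (Finset.mem_univ v),
          Finset.sdiff_singleton_eq_erase]
      have h2 : ∑ u, c u = c v + ∑ u ∈ Finset.univ.erase v, c u := by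
        rw [Finset.add_sum_erase _ c (Finset.mem_univ v)]
      omega
    have : chromaticSum G ≤ ∑ u, c' u :=
      Nat.sInf_le ⟨c', hproper, rfl⟩
    omega
  refine ⟨⟨c, hc, hbd, hsum.symm⟩, Nat.sInf_le ⟨c, hc, hbd, hsum.symm⟩⟩
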